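/- Let H be a real Hilbert space, L : H → H a bounded symmetric linear operator satisfying a Gårding inequality ⟨Lξ,ξ⟩ ≥ α‖ξ‖² − β‖ξ‖_W² for all ξ ∈ H, where α, β > 0 and ‖·‖_W is a norm in which the embedding H ↪ W is compact. If additionally L is injective (⟨Lξ,ξ⟩ > 0 for all ξ ≠ 0), then L is bijective with bounded inverse, and consequently L satisfies the inf–sup condition: there exists γ > 0 with inf_{ζ≠0} sup_{ξ≠0} ⟨Lξ,ζ⟩/(‖ξ‖‖ζ‖) ≥ γ. -/

import Mathlib

open RealInnerProductSpace

theorem stmt13 {H W : Type*}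
    [NormedAddCommGroup H] [InnerProductSpace ℝ H] [CompleteSpace H]
    [NormedAddCommGroup W] [InnerProductSpace ℝ W] [CompleteSpace W]
    (L : H →L[ℝ] H) (hsym : ∀ x y : H, ⟪L x, y⟫ = ⟪x, L y⟫)
    (ι : H →L[ℝ] W) (hι : IsCompactOperator ι)
    (α β : ℝ) (hα : 0 < α) (hβ : 0 < β)
    (hgard : ∀ ξ : H, α * ‖ξ‖ ^ 2 - β * ‖ι ξ‖ ^ 2 ≤ ⟪L ξ, ξ⟫)
    (hpos : ∀ ξ : H, ξ ≠ 0 → 0 < ⟪L ξ, ξ⟫) :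
    (∃ e : H ≃L[ℝ] H, (e : H → H) = L) ∧
    ∃ γ > 0, ∀ ζ : H, ζ ≠ 0 → ∃ ξ : H, ξ ≠ 0 ∧ γ * (‖ξ‖ * ‖ζ‖) ≤ ⟪L ξ, ζ⟫ := by
  -- Step 1: L is bounded below.
  have key : ∃ c > 0, ∀ x : H, c * ‖x‖ ≤ ‖L x‖ := by
    by_contra hc
    push_neg at hc
    have hseq : ∀ n : ℕ, ∃ y : H, ‖y‖ = 1 ∧ ‖L y‖ < 1 / (n + 1) := by
      intro n
      obtain ⟨x, hx⟩ := hc (1 / (n + 1)) (by positivity)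
      have hx0 : x ≠ 0 := by
        rintro rfl
        simp at hx
      have hxn : (0:ℝ) < ‖x‖ := norm_pos_iff.mpr hx0
      refine ⟨‖x‖⁻¹ • x, ?_, ?_⟩
      · rw [norm_smul, norm_inv, norm_norm, inv_mul_cancel₀ hxn.ne']
      · rw [map_smul, norm_smul, norm_inv, norm_norm]
        calc ‖x‖⁻¹ * ‖L x‖ < ‖x‖⁻¹ * (1 / (n + 1) * ‖x‖) := by
              exact mul_lt_mul_of_pos_left hx (inv_pos.mpr hxn)
          _ = 1 / (n + 1) := by field_simp
    choose y hy1 hy2 using hseq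
    have hLy : Filter.Tendsto (fun n => L (y n)) Filter.atTop (nhds 0) := by
      rw [tendsto_zero_iff_norm_tendsto_zero]
      refine squeeze_zero (fun n => norm_nonneg _) (fun n => (hy2 n).le) ?_
      exact tendsto_one_div_add_atTop_nhds_zero_nat
    obtain ⟨K, hK, hKsub⟩ := hι.image_closedBall_subset_compact (𝕜₁ := ℝ) 1
    have hmem : ∀ n, ι (y n) ∈ K := fun n =>
      hKsub ⟨y n, by simp [Metric.mem_closedBall, hy1 n], rfl⟩
    obtain ⟨w, -, φ, hφ, hw⟩ := hK.tendsto_subseq hmem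
    -- T = L + β • ι* ∘ ι is bounded below by α.
    set A : H →L[ℝ] H := (ContinuousLinearMap.adjoint ι).comp ι with hA
    set T : H →L[ℝ] H := L + β • A with hTdef
    have hTcoer : ∀ x : H, α * ‖x‖ ≤ ‖T x‖ := by
      intro x
      rcases eq_or_ne x 0 with rfl | hx0
      · simp
      have hxn : (0:ℝ) < ‖x‖ := norm_pos_iff.mpr hx0
      have h1 : α * ‖x‖ ^ 2 ≤ ⟪T x, x⟫ := by
        have hAx : ⟪A x, x⟫ = ‖ι x‖ ^ 2 := by
          rw [hA]
          simp only [ContinuousLinearMap.comp_apply]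
          rw [ContinuousLinearMap.adjoint_inner_left, real_inner_self_eq_norm_sq]
        have : ⟪T x, x⟫ = ⟪L x, x⟫ + β * ‖ι x‖ ^ 2 := by
          rw [hTdef]
          simp only [ContinuousLinearMap.add_apply, ContinuousLinearMap.smul_apply]
          rw [inner_add_left, real_inner_smul_left, hAx]
        rw [this]
        linarith [hgard x]
      have h2 : ⟪T x, x⟫ ≤ ‖T x‖ * ‖x‖ := real_inner_le_norm _ _
      have := h1.trans h2
      nlinarith
    -- T (y (φ k)) converges, hence y (φ k) is Cauchy.
    have hTlim : Filter.Tendsto (fun k => T (y (φ k))) Filter.atTop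
        (nhds (β • (ContinuousLinearMap.adjoint ι) w)) := by
      have h1 : Filter.Tendsto (fun k => L (y (φ k))) Filter.atTop (nhds 0) :=
        hLy.comp hφ.tendsto_atTop
      have h2 : Filter.Tendsto (fun k => β • (ContinuousLinearMap.adjoint ι) (ι (y (φ k))))
          Filter.atTop (nhds (β • (ContinuousLinearMap.adjoint ι) w)) :=
        (((ContinuousLinearMap.adjoint ι).continuous.tendsto w).comp hw).const_smul β
      have hsum := h1.add h2
      rw [zero_add] at hsum
      have heq : (fun k => T (y (φ k))) = fun k =>
          L (y (φ k)) + β • (ContinuousLinearMap.adjoint ι) (ι (y (φ k))) := by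
        funext k
        rw [hTdef]
        simp [hA]
      rw [heq]
      exact hsum
    have hcauchyT : CauchySeq (fun k => T (y (φ k))) := hTlim.cauchySeq
    have hcauchy : CauchySeq (fun k => y (φ k)) := by
      rw [Metric.cauchySeq_iff]
      intro ε hε
      rw [Metric.cauchySeq_iff] at hcauchyT
      obtain ⟨N, hN⟩ := hcauchyT (α * ε) (by positivity)
      refine ⟨N, fun m hm n hn => ?_⟩
      have hd := hN m hm n hn
      rw [dist_eq_norm] at hd ⊢
      have h1 : α * ‖y (φ m) - y (φ n)‖ ≤ ‖T (y (φ m) - y (φ n))‖ := hTcoer _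
      rw [map_sub] at h1
      have : α * ‖y (φ m) - y (φ n)‖ < α * ε := lt_of_le_of_lt h1 hd
      exact lt_of_mul_lt_mul_left this hα.le
    obtain ⟨x, hx⟩ := cauchySeq_tendsto_of_complete hcauchy
    have hxnorm : ‖x‖ = 1 := by
      have : Filter.Tendsto (fun k => ‖y (φ k)‖) Filter.atTop (nhds ‖x‖) :=
        (continuous_norm.tendsto x).comp hx
      have h2 : Filter.Tendsto (fun _ : ℕ => (1:ℝ)) Filter.atTop (nhds 1) := tendsto_const_nhds
      have : Filter.Tendsto (fun _ : ℕ => (1:ℝ)) Filter.atTop (nhds ‖x‖) := by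
        convert this using 1
        ext k; rw [hy1]
      exact (tendsto_nhds_unique h2 this).symm
    have hx0 : x ≠ 0 := by
      intro h; rw [h, norm_zero] at hxnorm; norm_num at hxnorm
    have hLx : L x = 0 := by
      have h1 : Filter.Tendsto (fun k => L (y (φ k))) Filter.atTop (nhds (L x)) :=
        (L.continuous.tendsto x).comp hx
      have h2 : Filter.Tendsto (fun k => L (y (φ k))) Filter.atTop (nhds 0) :=
        hLy.comp hφ.tendsto_atTop
      exact tendsto_nhds_unique h1 h2
    have := hpos x hx0
    rw [hLx, inner_zero_left] at this
    exact lt_irrefl 0 this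
  obtain ⟨c, hc, hlow⟩ := key
  -- L is injective.
  have hinj : Function.Injective L := by
    intro a b hab
    have h1 : c * ‖a - b‖ ≤ ‖L (a - b)‖ := hlow _
    rw [map_sub, hab, sub_self, norm_zero] at h1
    have : ‖a - b‖ ≤ 0 := by
      by_contra h
      push_neg at h
      nlinarith
    rw [← sub_eq_zero]
    exact norm_le_zero_iff.mp this
  -- The range of L is closed.
  have hanti : AntilipschitzWith (⟨c, hc.le⟩ : NNReal)⁻¹ L := by
    apply ContinuousLinearMap.antilipschitz_of_bound
    intro x
    change ‖x‖ ≤ c⁻¹ * ‖L x‖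
    rw [inv_mul_eq_div, le_div_iff₀ hc]
    linarith [hlow x]
  have hclosed : IsClosed (Set.range L) :=
    hanti.isClosed_range L.uniformContinuous
  -- The range of L is all of H.
  have hrange : LinearMap.range (L : H →ₗ[ℝ] H) = ⊤ := by
    have hcl : IsClosed ((LinearMap.range (L : H →ₗ[ℝ] H) : Submodule ℝ H) : Set H) := by
      convert hclosed using 1
      exact LinearMap.coe_range _
    haveI : CompleteSpace (LinearMap.range (L : H →ₗ[ℝ] H) : Submodule ℝ H) := hcl.completeSpace_coe
    rw [← Submodule.orthogonal_eq_bot_iff]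
    rw [Submodule.eq_bot_iff]
    intro z hz
    have hLz : L z = 0 := by
      have h1 : ⟪L (L z), z⟫ = 0 := by
        have : L (L z) ∈ LinearMap.range (L : H →ₗ[ℝ] H) := ⟨L z, rfl⟩
        exact (Submodule.mem_orthogonal _ z).mp hz _ this
      rw [hsym] at h1
      exact inner_self_eq_zero.mp h1
    have h1 : c * ‖z‖ ≤ ‖L z‖ := hlow z
    rw [hLz, norm_zero] at h1
    have : ‖z‖ ≤ 0 := by nlinarith [norm_nonneg z]
    exact norm_le_zero_iff.mp this
  have hker : LinearMap.ker (L : H →ₗ[ℝ] H) = ⊥ := LinearMap.ker_eq_bot.mpr hinj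
  refine ⟨⟨ContinuousLinearEquiv.ofBijective L hker hrange, rfl⟩, c, hc, ?_⟩
  intro ζ hζ
  obtain ⟨ξ, hξ⟩ : ∃ ξ, L ξ = ζ := by
    have : ζ ∈ LinearMap.range (L : H →ₗ[ℝ] H) := by rw [hrange]; trivial
    exact this
  have hξ0 : ξ ≠ 0 := by
    rintro rfl
    rw [map_zero] at hξ
    exact hζ hξ.symm
  refine ⟨ξ, hξ0, ?_⟩
  have h1 : c * ‖ξ‖ ≤ ‖ζ‖ := by
    have := hlow ξ
    rwa [hξ] at this
  calc c * (‖ξ‖ * ‖ζ‖) = (c * ‖ξ‖) * ‖ζ‖ := by ring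
    _ ≤ ‖ζ‖ * ‖ζ‖ := mul_le_mul_of_nonneg_right h1 (norm_nonneg _)
    _ = ⟪ζ, ζ⟫ := (real_inner_self_eq_norm_mul_norm ζ).symm
    _ = ⟪L ξ, ζ⟫ := by rw [hξ]
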